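/- Let T be a symmetric (p+1)×(p+1) matrix and define [[1, zᵀ],[z, Z]] := A⁻¹ T (Aᵀ)⁻¹ where A = [[1, 0ᵀ],[−e, 2I]] (e the all-ones vector in ℝ^p, I the p×p identity). Then T ⪰ 0 with all diagonal entries Tᵢᵢ = 1 (i = 1,…,p+1) if and only if Z ⪰ zzᵀ and Zᵢᵢ = zᵢ for i = 1,…,p. -/
import Mathlib


open Matrix Finset

/-- The congruence matrix `A = [[1, 0ᵀ],[−e, 2I]]`, indexed by `Fin 1 ⊕ Fin p`. -/
noncomputable def Amat (p : ℕ) : Matrix (Fin 1 ⊕ Fin p) (Fin 1 ⊕ Fin p) ℝ :=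
  Matrix.fromBlocks 1 0 (Matrix.of fun _ _ => (-1 : ℝ)) ((2 : ℝ) • 1)

/-- with `[[1, zᵀ],[z, Z]] = A⁻¹ T (Aᵀ)⁻¹`, one has `T ⪰ 0` with unit
diagonal iff `Z ⪰ zzᵀ` and `Zᵢᵢ = zᵢ` for all `i`. -/
theorem stmt19 (p : ℕ) (T : Matrix (Fin 1 ⊕ Fin p) (Fin 1 ⊕ Fin p) ℝ)
    (hT : T.IsSymm) (z : Fin p → ℝ) (Z : Matrix (Fin p) (Fin p) ℝ)
    (hdef : Matrix.fromBlocks (Matrix.of fun _ _ => (1 : ℝ))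
        (Matrix.of fun (_ : Fin 1) j => z j) (Matrix.of fun i (_ : Fin 1) => z i) Z
      = (Amat p)⁻¹ * T * ((Amat p)ᵀ)⁻¹) :
    (T.PosSemidef ∧ ∀ i, T i i = 1)
      ↔ ((Z - Matrix.vecMulVec z z).PosSemidef ∧ ∀ i, Z i i = z i) := by
  set A := Amat p with hA
  set M : Matrix (Fin 1 ⊕ Fin p) (Fin 1 ⊕ Fin p) ℝ :=
    Matrix.fromBlocks (Matrix.of fun _ _ => (1 : ℝ))
      (Matrix.of fun (_ : Fin 1) j => z j) (Matrix.of fun i (_ : Fin 1) => z i) Z with hM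
  have hdet : IsUnit A.det := by
    have : A.det = 2 ^ p := by
      simp [hA, Amat, Matrix.det_fromBlocks_zero₁₂, Matrix.det_smul]
    rw [this]
    exact (pow_ne_zero p two_ne_zero).isUnit
  have hdetT : IsUnit Aᵀ.det := by rwa [Matrix.det_transpose]
  -- T = A * M * Aᵀ
  have hTM : T = A * M * Aᵀ := by
    rw [hdef, ← Matrix.mul_assoc, ← Matrix.mul_assoc, Matrix.mul_nonsing_inv _ hdet,
      Matrix.one_mul, Matrix.mul_assoc, Matrix.nonsing_inv_mul _ hdetT, Matrix.mul_one]
  -- conjTranspose = transpose over ℝ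
  have hct : ∀ (B : Matrix (Fin 1 ⊕ Fin p) (Fin 1 ⊕ Fin p) ℝ), Bᴴ = Bᵀ := fun B => by
    ext i j; simp [Matrix.conjTranspose_apply]
  -- PSD equivalence via congruence
  have hpsd : T.PosSemidef ↔ M.PosSemidef := by
    constructor
    · intro h
      have := h.mul_mul_conjTranspose_same A⁻¹
      rwa [hct, Matrix.transpose_nonsing_inv, ← hdef] at this
    · intro h
      have := h.mul_mul_conjTranspose_same A
      rwa [hct, ← hTM] at this
  -- block form: identify pieces for Schur complement
  have h11 : (Matrix.of fun _ _ => (1 : ℝ)) = (1 : Matrix (Fin 1) (Fin 1) ℝ) := by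
    ext i j
    fin_cases i; fin_cases j; simp
  have h21 : (Matrix.of fun i (_ : Fin 1) => z i)
      = (Matrix.of fun (_ : Fin 1) j => z j)ᴴ := by
    ext i j; simp [Matrix.conjTranspose_apply]
  have hone : (1 : Matrix (Fin 1) (Fin 1) ℝ).PosDef := by
    simpa using Matrix.PosDef.diagonal (fun _ : Fin 1 => zero_lt_one (α := ℝ))
  haveI : Invertible (1 : Matrix (Fin 1) (Fin 1) ℝ) := invertibleOne
  have hschur : M.PosSemidef ↔ (Z - Matrix.vecMulVec z z).PosSemidef := by
    rw [hM, h11, h21, Matrix.PosDef.fromBlocks₁₁ _ _ hone]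
    have : (Matrix.of fun (_ : Fin 1) j => z j)ᴴ * (1 : Matrix (Fin 1) (Fin 1) ℝ)⁻¹ *
        (Matrix.of fun (_ : Fin 1) j => z j) = Matrix.vecMulVec z z := by
      rw [inv_one, Matrix.mul_one]
      ext i j
      simp [Matrix.mul_apply, Matrix.vecMulVec_apply, Fin.sum_univ_succ, mul_comm]
    rw [this]
  -- diagonal computations
  have hdiag2 : ∀ i, T (Sum.inr i) (Sum.inr i) = 1 - 4 * z i + 4 * Z i i := by
    intro i
    rw [hTM]
    simp [Matrix.mul_apply, Fintype.sum_sum_type, hA, Amat, hM, Matrix.fromBlocks,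
      Matrix.one_apply, Finset.mul_sum, Finset.sum_ite_eq, Finset.sum_ite_eq']
    ring
  have hdiag1 : ∀ i, T (Sum.inl i) (Sum.inl i) = 1 := by
    intro i
    rw [hTM]
    simp [Matrix.mul_apply, Fintype.sum_sum_type, hA, Amat, hM, Matrix.fromBlocks,
      Matrix.one_apply, Fin.eq_zero]
  constructor
  · rintro ⟨h1, h2⟩
    refine ⟨hschur.mp (hpsd.mp h1), fun i => ?_⟩
    have := h2 (Sum.inr i)
    rw [hdiag2 i] at this
    linarith
  · rintro ⟨h1, h2⟩
    refine ⟨hpsd.mpr (hschur.mpr h1), fun i => ?_⟩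
    cases i with
    | inl i => exact hdiag1 i
    | inr i => rw [hdiag2 i, h2 i]; ring
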